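/- Let n ≥ 3 and 2 ≤ k ≤ n, and set δ_k = (2k−n)(n−1)/(2nk−2k−n) and Λ_0 = (1,1,…,1,δ_k) ∈ ℝ^n. Then σ_k(A_{Λ_0}) = 0 and σ_j(A_{Λ_0}) > 0 for every 1 ≤ j ≤ k−1; consequently A_{Λ_0} ∈ Γ̄_k^+. Moreover min_i (Λ_0)_i = δ_k = ((2k−n)/(2n(k−1))) · σ_1(Λ_0), so the constant (2k−n)/(2n(k−1)) in the inequality min_i λ_i ≥ ((2k−n)/(2n(k−1)))·σ_1(Λ) for A_Λ ∈ Γ̄_k^+ is optimal. -/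

import Mathlib

/-- The `k`-th elementary symmetric polynomial of `x : Fin n → ℝ`. -/
noncomputable def sigmaElem (n k : ℕ) (x : Fin n → ℝ) : ℝ :=
  ∑ s ∈ Finset.univ.powersetCard k, ∏ i ∈ s, x i

/-- The Gårding cone `Γ_k^+ ⊆ ℝ^n`: the connected component of
`{σ_k > 0}` containing `(1, …, 1)`. -/
def GammaPlus (n k : ℕ) : Set (Fin n → ℝ) :=
  connectedComponentIn {x | 0 < sigmaElem n k x} (fun _ => 1)

/-- `A_Λ = Λ − (Σ_i λ_i / (2(n−1))) · (1,…,1)`. -/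
noncomputable def ALam (n : ℕ) (Λ : Fin n → ℝ) : Fin n → ℝ :=
  fun i => Λ i - (∑ j, Λ j) / (2 * ((n : ℝ) - 1))

lemma sigma_two_block (n m : ℕ) (i₀ : Fin n) (a y : ℝ) :
    sigmaElem n (m + 1) (fun i => if i = i₀ then y else a) =
      ((n - 1).choose (m + 1) : ℝ) * a ^ (m + 1) +
        ((n - 1).choose m : ℝ) * a ^ m * y := by
  classical
  set t : Finset (Fin n) := Finset.univ.erase i₀ with ht
  have hi₀t : i₀ ∉ t := Finset.notMem_erase _ _
  have huniv : insert i₀ t = Finset.univ := Finset.insert_erase (Finset.mem_univ i₀)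
  have hcardt : t.card = n - 1 := by
    rw [ht, Finset.card_erase_of_mem (Finset.mem_univ i₀), Finset.card_univ, Fintype.card_fin]
  have hdisj : Disjoint (Finset.powersetCard (m + 1) t)
      ((Finset.powersetCard m t).image (insert i₀)) := by
    rw [Finset.disjoint_left]
    intro s hs hs'
    obtain ⟨u, hu, rfl⟩ := Finset.mem_image.mp hs'
    exact hi₀t ((Finset.mem_powersetCard.mp hs).1 (Finset.mem_insert_self i₀ u))
  rw [sigmaElem, ← huniv, Finset.powersetCard_succ_insert hi₀t, Finset.sum_union hdisj]
  have h1 : ∑ s ∈ Finset.powersetCard (m + 1) t,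
      ∏ i ∈ s, (if i = i₀ then y else a) = ((n - 1).choose (m + 1) : ℝ) * a ^ (m + 1) := by
    have hp : ∀ s ∈ Finset.powersetCard (m + 1) t,
        ∏ i ∈ s, (if i = i₀ then y else a) = a ^ (m + 1) := by
      intro s hs
      obtain ⟨hsub, hcard⟩ := Finset.mem_powersetCard.mp hs
      have hq : ∀ i ∈ s, (if i = i₀ then y else a) = a := by
        intro i hi
        have : i ≠ i₀ := Finset.ne_of_mem_erase (hsub hi)
        simp [this]
      rw [Finset.prod_congr rfl hq, Finset.prod_const, hcard]
    rw [Finset.sum_congr rfl hp, Finset.sum_const, Finset.card_powersetCard, hcardt,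
      nsmul_eq_mul]
  have hinj : ∀ s ∈ Finset.powersetCard m t, ∀ u ∈ Finset.powersetCard m t,
      insert i₀ s = insert i₀ u → s = u := by
    intro s hs u hu h
    have hs' : i₀ ∉ s := fun hh => hi₀t ((Finset.mem_powersetCard.mp hs).1 hh)
    have hu' : i₀ ∉ u := fun hh => hi₀t ((Finset.mem_powersetCard.mp hu).1 hh)
    rw [← Finset.erase_insert hs', ← Finset.erase_insert hu', h]
  have h2 : ∑ s ∈ (Finset.powersetCard m t).image (insert i₀),
      ∏ i ∈ s, (if i = i₀ then y else a) = ((n - 1).choose m : ℝ) * a ^ m * y := by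
    rw [Finset.sum_image hinj]
    have hp : ∀ s ∈ Finset.powersetCard m t,
        ∏ i ∈ insert i₀ s, (if i = i₀ then y else a) = y * a ^ m := by
      intro s hs
      obtain ⟨hsub, hcard⟩ := Finset.mem_powersetCard.mp hs
      have hi₀s : i₀ ∉ s := fun h => hi₀t (hsub h)
      have hq : ∀ i ∈ s, (if i = i₀ then y else a) = a := by
        intro i hi
        have : i ≠ i₀ := Finset.ne_of_mem_erase (hsub hi)
        simp [this]
      rw [Finset.prod_insert hi₀s, if_pos rfl, Finset.prod_congr rfl hq,
        Finset.prod_const, hcard]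
    rw [Finset.sum_congr rfl hp, Finset.sum_const, Finset.card_powersetCard, hcardt,
      nsmul_eq_mul]
    ring
  rw [h1, h2]

/-- with `δ_k = (2k−n)(n−1)/(2nk−2k−n)` and `Λ_0 = (1,…,1,δ_k)`,
one has `σ_k(A_{Λ_0}) = 0`, `σ_j(A_{Λ_0}) > 0` for `1 ≤ j ≤ k−1`, hence
`A_{Λ_0} ∈ Γ̄_k^+`; moreover `min_i (Λ_0)_i = δ_k = ((2k−n)/(2n(k−1)))·σ_1(Λ_0)`,
showing that the constant in Lemma 1 is optimal. -/
theorem optimal_constant (n k : ℕ) (hn : 3 ≤ n) (hk : 2 ≤ k) (hkn : k ≤ n)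
    (δ : ℝ) (hδ : δ = (2 * (k : ℝ) - n) * ((n : ℝ) - 1) / (2 * n * k - 2 * k - n))
    (Λ₀ : Fin n → ℝ) (hΛ₀ : Λ₀ = fun i : Fin n => if (i : ℕ) = n - 1 then δ else 1) :
    sigmaElem n k (ALam n Λ₀) = 0 ∧
    (∀ j, 1 ≤ j → j ≤ k - 1 → 0 < sigmaElem n j (ALam n Λ₀)) ∧
    ALam n Λ₀ ∈ closure (GammaPlus n k) ∧
    (∀ i, δ ≤ Λ₀ i) ∧ (∃ i, Λ₀ i = δ) ∧
    δ = (2 * (k : ℝ) - n) / (2 * n * ((k : ℝ) - 1)) * ∑ i, Λ₀ i := by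
  have hn3 : (3 : ℝ) ≤ (n : ℝ) := by exact_mod_cast hn
  have hk2 : (2 : ℝ) ≤ (k : ℝ) := by exact_mod_cast hk
  have hknR : (k : ℝ) ≤ (n : ℝ) := by exact_mod_cast hkn
  have hD : (0 : ℝ) < 2 * n * k - 2 * k - n := by nlinarith
  have hDne : (2 * (n : ℝ) * k - 2 * k - n) ≠ 0 := ne_of_gt hD
  have hn1 : ((n : ℝ) - 1) ≠ 0 := by nlinarith
  have hkne : (k : ℝ) ≠ 0 := by positivity
  set i₀ : Fin n := ⟨n - 1, by omega⟩ with hi₀def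
  have hval : ∀ i : Fin n, ((i : ℕ) = n - 1) ↔ i = i₀ := by
    intro i
    constructor
    · intro h; exact Fin.ext h
    · intro h; rw [h]
  have hΛform : Λ₀ = fun i : Fin n => if i = i₀ then δ else 1 := by
    rw [hΛ₀]; funext i
    by_cases h : i = i₀
    · rw [if_pos ((hval i).mpr h), if_pos h]
    · rw [if_neg (fun hh => h ((hval i).mp hh)), if_neg h]
  have hsum : ∑ i, Λ₀ i = δ + ((n : ℝ) - 1) := by
    rw [hΛform]
    have h1 : ∀ i : Fin n, (if i = i₀ then δ else 1) = (if i = i₀ then δ - 1 else 0) + 1 := by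
      intro i; split <;> ring
    rw [Finset.sum_congr rfl (fun i _ => h1 i), Finset.sum_add_distrib,
      Finset.sum_ite_eq' Finset.univ i₀ (fun _ => δ - 1), if_pos (Finset.mem_univ i₀),
      Finset.sum_const, Finset.card_univ, Fintype.card_fin, nsmul_eq_mul, mul_one]
    ring
  -- the reduced point A = (a, …, a, b)
  obtain ⟨a, b, ha, hkb, hA⟩ :
      ∃ a b : ℝ, 0 < a ∧ (k : ℝ) * b = ((k : ℝ) - n) * a ∧
        ALam n Λ₀ = fun i : Fin n => if i = i₀ then b else a := by
    refine ⟨(k : ℝ) * ((n : ℝ) - 2) / (2 * n * k - 2 * k - n),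
      ((n : ℝ) - 2) * ((k : ℝ) - n) / (2 * n * k - 2 * k - n), ?_, ?_, ?_⟩
    · apply div_pos _ hD; nlinarith
    · field_simp
    · funext i
      have hAi : ALam n Λ₀ i = Λ₀ i - (∑ j, Λ₀ j) / (2 * ((n : ℝ) - 1)) := rfl
      rw [hAi, hsum, hΛform, hδ]
      by_cases h : i = i₀
      · simp only [h, if_pos rfl, ↓reduceIte]
        field_simp [show (2 * (k : ℝ) * ((n : ℝ) - 1) - n) ≠ 0 from fun h => hDne (by linarith)]
        ring
      · simp only [if_neg h]
        field_simp [show (2 * (k : ℝ) * ((n : ℝ) - 1) - n) ≠ 0 from fun h => hDne (by linarith)]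
        ring
  -- choose identity
  have hch : ∀ j : ℕ, 1 ≤ j → j ≤ n →
      (j : ℝ) * ((n - 1).choose j : ℝ) = ((n : ℝ) - j) * ((n - 1).choose (j - 1) : ℝ) := by
    intro j hj1 hjn
    obtain ⟨m, rfl⟩ : ∃ m, j = m + 1 := ⟨j - 1, by omega⟩
    have h := Nat.choose_succ_right_eq (n - 1) m
    have hcast : (((n - 1).choose (m + 1) : ℕ) : ℝ) * ((m + 1 : ℕ) : ℝ)
        = (((n - 1).choose m : ℕ) : ℝ) * (((n - 1 - m : ℕ)) : ℝ) := by exact_mod_cast h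
    have hmn : m ≤ n - 1 := by omega
    have h2 : ((n - 1 - m : ℕ) : ℝ) = (n : ℝ) - 1 - m := by
      rw [Nat.cast_sub hmn, Nat.cast_sub (by omega : 1 ≤ n)]
      push_cast; ring
    rw [h2] at hcast
    simp only [Nat.add_sub_cancel]
    push_cast at hcast ⊢
    linarith [hcast]
  -- the key formula
  have key : ∀ j : ℕ, 1 ≤ j → j ≤ n →
      sigmaElem n j (ALam n Λ₀) * ((j : ℝ) * k) =
        a ^ (j - 1) * a * ((n - 1).choose (j - 1) : ℝ) * n * ((k : ℝ) - j) := by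
    intro j hj1 hjn
    obtain ⟨m, rfl⟩ : ∃ m, j = m + 1 := ⟨j - 1, by omega⟩
    rw [hA, sigma_two_block n m i₀ a b]
    have hc := hch (m + 1) (by omega) hjn
    simp only [Nat.add_sub_cancel] at hc ⊢
    push_cast at hc ⊢
    linear_combination (a ^ (m + 1) * (k : ℝ)) * hc +
      (((m : ℝ) + 1) * ((n - 1).choose m : ℝ) * a ^ m) * hkb
  -- part 1: σ_k = 0
  have part1 : sigmaElem n k (ALam n Λ₀) = 0 := by
    have h := key k (by omega) hkn
    have : sigmaElem n k (ALam n Λ₀) * ((k : ℝ) * k) = 0 := by rw [h]; ring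
    have hkk : ((k : ℝ) * k) ≠ 0 := by positivity
    exact (mul_eq_zero.mp this).resolve_right hkk
  -- part 2: σ_j > 0 for 1 ≤ j ≤ k-1
  have part2 : ∀ j, 1 ≤ j → j ≤ k - 1 → 0 < sigmaElem n j (ALam n Λ₀) := by
    intro j hj1 hjk
    have hjk' : j < k := by omega
    have hjn : j ≤ n := by omega
    have hjkR : (j : ℝ) < (k : ℝ) := by exact_mod_cast hjk'
    have hjR : (0 : ℝ) < (j : ℝ) := by exact_mod_cast hj1
    have h := key j hj1 hjn
    have hc0 : (0 : ℝ) < ((n - 1).choose (j - 1) : ℝ) := by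
      exact_mod_cast Nat.choose_pos (by omega : j - 1 ≤ n - 1)
    have hjkpos : (0 : ℝ) < (j : ℝ) * k := by positivity
    have hσ : sigmaElem n j (ALam n Λ₀) =
        a ^ (j - 1) * a * ((n - 1).choose (j - 1) : ℝ) * n * ((k : ℝ) - j) / ((j : ℝ) * k) := by
      rw [eq_div_iff (ne_of_gt hjkpos)]; exact h
    rw [hσ]
    have hnpos : (0 : ℝ) < (n : ℝ) := by linarith
    have : (0 : ℝ) < (k : ℝ) - j := by linarith
    positivity
  -- part 3: closure
  have hE : ((n - 1).choose k : ℝ) * a + ((n - 1).choose (k - 1) : ℝ) * b = 0 := by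
    have hc := hch k (by omega) hkn
    have h0 : (k : ℝ) * (((n - 1).choose k : ℝ) * a + ((n - 1).choose (k - 1) : ℝ) * b) = 0 := by
      linear_combination a * hc + ((n - 1).choose (k - 1) : ℝ) * hkb
    exact (mul_eq_zero.mp h0).resolve_left hkne
  have part3 : ALam n Λ₀ ∈ closure (GammaPlus n k) := by
    set γ : ℝ → Fin n → ℝ :=
      fun t => fun i : Fin n => (1 - t) + t * (if i = i₀ then b else a) with hγdef
    have hγcont : Continuous γ := by
      apply continuous_pi
      intro i
      fun_prop
    have hγ0 : γ 0 = fun _ : Fin n => 1 := by funext i; simp [hγdef]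
    obtain ⟨m, hm⟩ : ∃ m, k = m + 1 := ⟨k - 1, by omega⟩
    have hsubS : ∀ t ∈ Set.Ico (0 : ℝ) 1, γ t ∈ {x | 0 < sigmaElem n k x} := by
      rintro t ⟨ht0, ht1⟩
      show 0 < sigmaElem n k (γ t)
      have hform : γ t = fun i : Fin n =>
          if i = i₀ then (1 - t) + t * b else (1 - t) + t * a := by
        funext i
        by_cases h : i = i₀ <;> simp [hγdef, h]
      rw [hform, hm, sigma_two_block n m i₀ ((1 - t) + t * a) ((1 - t) + t * b)]
      have hx : (0 : ℝ) < (1 - t) + t * a := by nlinarith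
      have hE' : ((n - 1).choose (m + 1) : ℝ) * a + ((n - 1).choose m : ℝ) * b = 0 := by
        have : k - 1 = m := by omega
        rw [← hm, ← this]; exact hE
      have hc0 : (0 : ℝ) < ((n - 1).choose m : ℝ) := by
        exact_mod_cast Nat.choose_pos (by omega : m ≤ n - 1)
      have hc1 : (0 : ℝ) ≤ ((n - 1).choose (m + 1) : ℝ) := by positivity
      have hrw : ((n - 1).choose (m + 1) : ℝ) * ((1 - t) + t * a) ^ (m + 1) +
          ((n - 1).choose m : ℝ) * ((1 - t) + t * a) ^ m * ((1 - t) + t * b) =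
          ((1 - t) + t * a) ^ m *
            ((1 - t) * (((n - 1).choose (m + 1) : ℝ) + ((n - 1).choose m : ℝ))) := by
        have expand : ((n - 1).choose (m + 1) : ℝ) * ((1 - t) + t * a) +
            ((n - 1).choose m : ℝ) * ((1 - t) + t * b) =
            (1 - t) * (((n - 1).choose (m + 1) : ℝ) + ((n - 1).choose m : ℝ)) := by
          linear_combination t * hE'
        calc ((n - 1).choose (m + 1) : ℝ) * ((1 - t) + t * a) ^ (m + 1) +
              ((n - 1).choose m : ℝ) * ((1 - t) + t * a) ^ m * ((1 - t) + t * b)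
            = ((1 - t) + t * a) ^ m * (((n - 1).choose (m + 1) : ℝ) * ((1 - t) + t * a) +
                ((n - 1).choose m : ℝ) * ((1 - t) + t * b)) := by ring
          _ = _ := by rw [expand]
      rw [hrw]
      have h1t : (0 : ℝ) < 1 - t := by linarith
      have : (0 : ℝ) < ((n - 1).choose (m + 1) : ℝ) + ((n - 1).choose m : ℝ) := by linarith
      positivity
    have hconn : IsPreconnected (γ '' Set.Ico 0 1) :=
      (isPreconnected_Ico).image γ hγcont.continuousOn
    have h1mem : (fun _ : Fin n => (1 : ℝ)) ∈ γ '' Set.Ico 0 1 :=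
      ⟨0, by constructor <;> norm_num, hγ0⟩
    have hsub : γ '' Set.Ico 0 1 ⊆ GammaPlus n k := by
      rw [GammaPlus]
      exact hconn.subset_connectedComponentIn h1mem
        (by rintro _ ⟨t, ht, rfl⟩; exact hsubS t ht)
    have hAeq : ALam n Λ₀ = γ 1 := by
      rw [hA]; funext i; simp [hγdef]
    rw [hAeq]
    have hmem1 : γ 1 ∈ γ '' closure (Set.Ico (0 : ℝ) 1) := by
      refine ⟨1, ?_, rfl⟩
      rw [closure_Ico (by norm_num : (0 : ℝ) ≠ 1)]
      constructor <;> norm_num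
    exact closure_mono hsub (image_closure_subset_closure_image hγcont hmem1)
  refine ⟨part1, part2, part3, ?_, ⟨i₀, by rw [hΛform]; simp⟩, ?_⟩
  · intro i
    simp only [hΛform]
    by_cases h : i = i₀
    · rw [if_pos h]
    · rw [if_neg h, hδ, div_le_one hD]
      nlinarith
  · rw [hsum, hδ]
    have hk1 : ((k : ℝ) - 1) ≠ 0 := by nlinarith
    have hnne : (n : ℝ) ≠ 0 := by positivity
    field_simp [show (2 * (k : ℝ) * ((n : ℝ) - 1) - n) ≠ 0 from fun h => hDne (by linarith)]
    ring
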